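/- There is an absolute constant C > 0 with the following property: for every prime p with p ≡ 3 (mod 4), letting S denote the (finite, nonempty) set of integer triples (a, b, c) with a ≥ 1, |b| ≤ a ≤ c and b² − 4ac = −p, and letting h = |S|, there exists a triple (a, b, c) ∈ S with a ≥ C·h/log(2h). -/

import Mathlib

/-- The set of reduced positive definite forms (a, b, c) of discriminant -p. -/
def reducedForms (p : ℕ) : Set (ℤ × ℤ × ℤ) :=
  {t | 1 ≤ t.1 ∧ |t.2.1| ≤ t.1 ∧ t.1 ≤ t.2.2 ∧ t.2.1 ^ 2 - 4 * t.1 * t.2.2 = -(p : ℤ)}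

lemma keyL2 (n : ℕ) : ∀ (b₀ b' b'' : ℤ),
    Nat.Coprime (2 * b₀).natAbs n →
    (n : ℤ) ∣ (b' - b₀) * (b' + b₀) → (n : ℤ) ∣ (b'' - b₀) * (b'' + b₀) →
    (∀ e : ℕ, e ∣ n → ((e : ℤ) ∣ b' - b₀ ↔ (e : ℤ) ∣ b'' - b₀)) →
    (n : ℤ) ∣ b'' - b' := by
  induction n using Nat.recOnPrimePow with
  | zero =>
    intro b₀ b' b'' hc _ _ _
    exfalso
    have h1 : (2 * b₀).natAbs = 1 := by simpa [Nat.Coprime] using hc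
    have h2 : (2 * b₀).natAbs = 2 * b₀.natAbs := by
      rw [Int.natAbs_mul]; rfl
    omega
  | one => intro _ _ _ _ _ _ _; simp
  | prime_pow_mul a q k hq hqa hk ih =>
    intro b₀ b' b'' hc h1 h2 he
    have hdq : (q : ℕ) ^ k ∣ q ^ k * a := Dvd.intro a rfl
    have hda : a ∣ q ^ k * a := Dvd.intro_left _ rfl
    have ha : (a : ℤ) ∣ b'' - b' := by
      refine ih b₀ b' b'' (hc.coprime_dvd_right hda) ?_ ?_ ?_
      · exact dvd_trans (Int.natCast_dvd_natCast.mpr hda) h1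
      · exact dvd_trans (Int.natCast_dvd_natCast.mpr hda) h2
      · exact fun e hea => he e (hea.trans hda)
    have hq' : Prime (q : ℤ) := Nat.prime_iff_prime_int.mp hq
    have hq2b : ¬ (q : ℤ) ∣ 2 * b₀ := by
      intro hd
      have h3 : q ∣ (2 * b₀).natAbs := by rwa [Int.natCast_dvd] at hd
      have h4 : q ∣ Nat.gcd (2 * b₀).natAbs (q ^ k * a) :=
        Nat.dvd_gcd h3 (dvd_trans (dvd_pow_self q hk.ne') hdq)
      rw [hc] at h4
      exact Nat.Prime.one_lt hq |>.ne' (Nat.eq_one_of_dvd_one h4)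
    have hqkd1 : ((q : ℤ)) ^ k ∣ (b' - b₀) * (b' + b₀) := by
      refine dvd_trans ?_ h1
      exact_mod_cast Int.natCast_dvd_natCast.mpr hdq
    have hqkd2 : ((q : ℤ)) ^ k ∣ (b'' - b₀) * (b'' + b₀) := by
      refine dvd_trans ?_ h2
      exact_mod_cast Int.natCast_dvd_natCast.mpr hdq
    have hqk : ((q : ℤ)) ^ k ∣ b'' - b' := by
      by_cases hcase : (q : ℤ) ∣ b' - b₀
      · have hnd : ¬ (q : ℤ) ∣ b' + b₀ := by
          intro hd
          exact hq2b (by have := dvd_sub hd hcase; simpa [show b' + b₀ - (b' - b₀) = 2 * b₀ by ring] using this)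
        have hcop : IsCoprime ((q : ℤ) ^ k) (b' + b₀) :=
          IsCoprime.pow_left ((hq'.coprime_iff_not_dvd).mpr hnd)
        have hd1 : ((q : ℤ)) ^ k ∣ b' - b₀ := hcop.dvd_of_dvd_mul_right hqkd1
        have hd2 : ((q : ℤ)) ^ k ∣ b'' - b₀ := by
          have := (he (q ^ k) hdq).mp (by exact_mod_cast hd1)
          exact_mod_cast this
        have : b'' - b' = (b'' - b₀) - (b' - b₀) := by ring
        rw [this]; exact dvd_sub hd2 hd1
      · have hcase2 : ¬ (q : ℤ) ∣ b'' - b₀ := fun hd =>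
          hcase ((he q ((dvd_pow_self q hk.ne').trans hdq)).mpr hd)
        have hcop1 : IsCoprime ((q : ℤ) ^ k) (b' - b₀) :=
          IsCoprime.pow_left ((hq'.coprime_iff_not_dvd).mpr hcase)
        have hcop2 : IsCoprime ((q : ℤ) ^ k) (b'' - b₀) :=
          IsCoprime.pow_left ((hq'.coprime_iff_not_dvd).mpr hcase2)
        have hd1 : ((q : ℤ)) ^ k ∣ b' + b₀ := hcop1.dvd_of_dvd_mul_left hqkd1
        have hd2 : ((q : ℤ)) ^ k ∣ b'' + b₀ := hcop2.dvd_of_dvd_mul_left hqkd2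
        have : b'' - b' = (b'' + b₀) - (b' + b₀) := by ring
        rw [this]; exact dvd_sub hd2 hd1
    -- combine
    have hcopqa : IsCoprime ((q : ℤ) ^ k) (a : ℤ) := by
      refine IsCoprime.pow_left ((hq'.coprime_iff_not_dvd).mpr ?_)
      intro hd
      exact hqa (Int.natCast_dvd_natCast.mp hd)
    have hfin := hcopqa.mul_dvd hqk ha
    have hfin := hcopqa.mul_dvd hqk ha
    exact_mod_cast hfin


lemma odd_of_sq_cong (p : ℕ) (hp4 : p % 4 = 3) (b : ℤ) (h : (4:ℤ) ∣ b^2 + p) :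
    ¬ (2:ℤ) ∣ b := by
  rintro ⟨k, rfl⟩
  obtain ⟨c, hc⟩ := h
  have hK : (p : ℤ) = 4 * (c - k^2) := by ring_nf; ring_nf at hc; linarith
  omega

lemma two_dichotomy (s : ℕ) (hs : 2 ≤ s) (x y : ℤ) (hx : ¬ (2:ℤ) ∣ x) (hy : ¬ (2:ℤ) ∣ y)
    (h : (2^s : ℤ) ∣ (x - y) * (x + y)) :
    (2^(s-1) : ℤ) ∣ x - y ∨ (2^(s-1) : ℤ) ∣ x + y := by
  have hxy : (2:ℤ) ∣ x - y := by
    rcases Int.even_or_odd x with hex | hox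
    · exact absurd hex.two_dvd hx
    rcases Int.even_or_odd y with hey | hoy
    · exact absurd hey.two_dvd hy
    exact (Odd.sub_odd hox hoy).two_dvd
  have hxy' : (2:ℤ) ∣ x + y := by
    have : x + y = (x - y) + 2 * y := by ring
    obtain ⟨u, hu⟩ := hxy
    exact ⟨u + y, by omega⟩
  obtain ⟨u, hu⟩ := hxy
  obtain ⟨v, hv⟩ := hxy'
  have huv : u + v = x := by omega
  have hor : ¬ (2:ℤ) ∣ u ∨ ¬ (2:ℤ) ∣ v := by
    by_contra hcon
    push_neg at hcon
    exact hx (huv ▸ dvd_add hcon.1 hcon.2)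
  have hprod : (2^(s-2) : ℤ) ∣ u * v := by
    have h4 : (2^s : ℤ) = 4 * 2^(s-2) := by
      rw [show s = 2 + (s-2) by omega, pow_add]; norm_num
    have : (4 * 2^(s-2) : ℤ) ∣ 4 * (u * v) := by
      rw [← h4]; convert h using 1; rw [hu, hv]; ring
    exact (mul_dvd_mul_iff_left (by norm_num : (4:ℤ) ≠ 0)).mp this
  have h2 : Prime (2 : ℤ) := Int.prime_two
  have hsplit : (2^(s-1) : ℤ) = 2^(s-2) * 2 := by
    rw [show s - 1 = (s-2) + 1 by omega, pow_succ]
  rcases hor with hou | hov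
  · right
    have hcop : IsCoprime ((2:ℤ)^(s-2)) u := IsCoprime.pow_left (h2.coprime_iff_not_dvd.mpr hou)
    have : (2^(s-2) : ℤ) ∣ v := hcop.dvd_of_dvd_mul_left hprod
    rw [hv, hsplit, mul_comm (2:ℤ) v]
    exact mul_dvd_mul this (dvd_refl 2)
  · left
    have hcop : IsCoprime ((2:ℤ)^(s-2)) v := IsCoprime.pow_left (h2.coprime_iff_not_dvd.mpr hov)
    have : (2^(s-2) : ℤ) ∣ u := hcop.dvd_of_dvd_mul_right hprod
    rw [hu, hsplit, mul_comm (2:ℤ) u]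
    exact mul_dvd_mul this (dvd_refl 2)

lemma slice_card_le (p : ℕ) (hp : p.Prime) (hp4 : p % 4 = 3)
    (F : Finset (ℤ × ℤ × ℤ)) (hF : ∀ t ∈ F, t ∈ reducedForms p) (a : ℕ) :
    (F.filter (fun t => t.1.toNat = a)).card ≤ 4 * a.divisors.card := by
  classical
  set G := F.filter (fun t => t.1.toNat = a) with hGdef
  obtain hGe | ⟨t₀, ht₀⟩ := G.eq_empty_or_nonempty
  · simp [hGe]
  -- facts about members
  have hmem : ∀ t ∈ G, t.1 = (a:ℤ) ∧ |t.2.1| ≤ (a:ℤ) ∧ ((4*a : ℤ)) ∣ t.2.1^2 + p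
      ∧ ¬ (2:ℤ) ∣ t.2.1 ∧ (a:ℤ) ≤ t.2.2 := by
    intro t ht
    rw [hGdef, Finset.mem_filter] at ht
    obtain ⟨htF, hta⟩ := ht
    obtain ⟨h1, h2, h3, h4⟩ := hF t htF
    have hta' : t.1 = (a:ℤ) := by omega
    have hdvd : (4*a : ℤ) ∣ t.2.1^2 + p := ⟨t.2.2, by rw [← hta']; linarith⟩
    refine ⟨hta', hta' ▸ h2, hdvd, ?_, hta' ▸ h3⟩
    exact odd_of_sq_cong p hp4 _ (dvd_trans ⟨(a:ℤ), by ring⟩ hdvd)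
  have ha1 : 1 ≤ a := by
    have h1 := (hF t₀ (Finset.mem_filter.mp (hGdef ▸ ht₀)).1).1
    have h2 := (hmem t₀ ht₀).1
    omega
  have ha0 : (0:ℤ) < (a:ℤ) := by exact_mod_cast ha1
  -- 3a^2 ≤ p
  have hineq : 3*(a:ℤ)^2 ≤ (p:ℤ) := by
    obtain ⟨h1, h2, h3, h4⟩ := hF t₀ (Finset.mem_filter.mp (hGdef ▸ ht₀)).1
    obtain ⟨hta, habs, -, -, hac⟩ := hmem t₀ ht₀
    have hb2 : t₀.2.1^2 ≤ (a:ℤ)^2 := by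
      have := abs_le.mp habs
      nlinarith [this.1, this.2]
    nlinarith [h4, hac, hb2, ha0]
  -- 2-adic decomposition of 4a
  have ha4 : 4*a ≠ 0 := by omega
  obtain ⟨s, m, hm2, hsm⟩ := Nat.exists_eq_pow_mul_and_not_dvd ha4 2 (by norm_num)
  have hm0 : m ≠ 0 := by rintro rfl; simp at hsm; omega
  have hs2 : 2 ≤ s := by
    rcases Nat.lt_or_ge s 2 with h | h
    · exfalso; apply hm2; interval_cases s
      · simp at hsm; exact ⟨2*a, by omega⟩
      · rw [pow_one] at hsm; exact ⟨a, by omega⟩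
    · exact h
  have hMa : 2^(s-1) * m = 2*a := by
    have : 2 * (2^(s-1) * m) = 2 * (2*a) := by
      rw [← mul_assoc, ← pow_succ']
      rw [show s - 1 + 1 = s by omega]
      omega
    omega
  set b₀ := t₀.2.1 with hb₀def
  obtain ⟨-, -, hdvd₀, hodd₀, -⟩ := hmem t₀ ht₀
  -- coprimality of 2b₀ and m
  have hcop : Nat.Coprime (2*b₀).natAbs m := by
    by_contra hnc
    set g := Nat.gcd (2*b₀).natAbs m with hgdef
    have hq : g.minFac.Prime := Nat.minFac_prime hnc
    set q := g.minFac with hqdef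
    have hqg : q ∣ g := Nat.minFac_dvd g
    have hqm : q ∣ m := hqg.trans (Nat.gcd_dvd_right _ _)
    have hq2 : q ≠ 2 := by intro h; rw [h] at hqm; exact hm2 hqm
    have hqb : q ∣ (2*b₀).natAbs := hqg.trans (Nat.gcd_dvd_left _ _)
    have hqb' : q ∣ b₀.natAbs := by
      have h2 : (2*b₀).natAbs = 2 * b₀.natAbs := by rw [Int.natAbs_mul]; rfl
      rw [h2] at hqb
      exact (Nat.Coprime.dvd_of_dvd_mul_left
        ((Nat.coprime_primes hq Nat.prime_two).mpr hq2) hqb)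
    have hmdvd : m ∣ 4*a := ⟨2^s, by rw [hsm]; ring⟩
    have hq4a : q ∣ 4*a := hqm.trans hmdvd
    have hqp : (q:ℤ) ∣ (p:ℤ) := by
      have h1 : (q:ℤ) ∣ b₀^2 + p := by
        refine dvd_trans ?_ hdvd₀
        exact_mod_cast Int.natCast_dvd_natCast.mpr hq4a
      have h2 : (q:ℤ) ∣ b₀^2 := by
        have := Int.natCast_dvd.mpr hqb'
        exact Dvd.dvd.mul_right this b₀ |>.trans (by rw [sq])
      have := dvd_sub h1 h2
      simpa using this
    have hqp' : q = p := (Nat.prime_dvd_prime_iff_eq hq hp).mp (by exact_mod_cast hqp)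
    have hpodd : ¬ p ∣ 4 := by
      intro hd
      have := Nat.le_of_dvd (by norm_num) hd
      interval_cases p <;> omega
    have hpa : p ∣ a := by
      rw [hqp'] at hq4a
      exact (Nat.Coprime.dvd_of_dvd_mul_left ((Nat.Prime.coprime_iff_not_dvd hp).mpr hpodd) hq4a)
    have hpa' : p ≤ a := Nat.le_of_dvd (by omega) hpa
    have hp2 : 2 ≤ p := hp.two_le
    have : (p:ℤ) ≤ (a:ℤ) := by exact_mod_cast hpa'
    nlinarith [hineq, this, (show (2:ℤ) ≤ p by exact_mod_cast hp2)]
  -- the fiber map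
  set ψ : ℤ × ℤ × ℤ → ℕ × Bool :=
    fun t => (Int.gcd (t.2.1 - b₀) m, decide ((2^(s-1) : ℤ) ∣ (t.2.1 - b₀))) with hψdef
  -- pair rigidity
  have hpair : ∀ t ∈ G, ∀ t' ∈ G, ψ t = ψ t' → (2*(a:ℤ)) ∣ t.2.1 - t'.2.1 := by
    intro t ht t' ht' hψ
    obtain ⟨-, -, hdvd, hodd, -⟩ := hmem t ht
    obtain ⟨-, -, hdvd', hodd', -⟩ := hmem t' ht'
    have hg : Int.gcd (t.2.1 - b₀) m = Int.gcd (t'.2.1 - b₀) m := congrArg Prod.fst hψ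
    have hflag : ((2^(s-1) : ℤ) ∣ (t.2.1 - b₀)) ↔ ((2^(s-1) : ℤ) ∣ (t'.2.1 - b₀)) := by
      have := congrArg Prod.snd hψ
      simpa [hψdef, decide_eq_decide] using this
    have hprod : ∀ x : ℤ, (4*(a:ℤ)) ∣ x^2 + p → (4*(a:ℤ)) ∣ (x - b₀)*(x + b₀) := by
      intro x hx
      have h0 : (4*(a:ℤ)) ∣ (x^2 + p) - (b₀^2 + p) := dvd_sub hx hdvd₀
      have h2 : (x - b₀)*(x + b₀) = (x^2 + p) - (b₀^2 + p) := by ring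
      rw [h2]; exact h0
    have hm4a : (m:ℤ) ∣ (4*(a:ℤ)) := by
      have h := Int.natCast_dvd_natCast.mpr (⟨2^s, by rw [hsm]; ring⟩ : m ∣ 4*a)
      push_cast at h; exact h
    have h2s4a : ((2^s : ℕ):ℤ) ∣ (4*(a:ℤ)) := by
      have h := Int.natCast_dvd_natCast.mpr (⟨m, hsm⟩ : 2^s ∣ 4*a)
      push_cast at h; exact_mod_cast h
    have h1 : (m:ℤ) ∣ (t.2.1 - b₀)*(t.2.1 + b₀) := hm4a.trans (hprod t.2.1 hdvd)
    have h2 : (m:ℤ) ∣ (t'.2.1 - b₀)*(t'.2.1 + b₀) := hm4a.trans (hprod t'.2.1 hdvd')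
    have hiff : ∀ e : ℕ, e ∣ m → ((e:ℤ) ∣ t.2.1 - b₀ ↔ (e:ℤ) ∣ t'.2.1 - b₀) := by
      intro e hem
      constructor <;> intro hx
      · have h3 : e ∣ Int.gcd (t.2.1 - b₀) m := by
          rw [Int.gcd_def]
          exact Nat.dvd_gcd (Int.natCast_dvd.mp hx) (by simpa using hem)
        rw [hg] at h3
        have := (Int.natCast_dvd_natCast.mpr h3).trans (Int.gcd_dvd_left _ _)
        exact_mod_cast this
      · have h3 : e ∣ Int.gcd (t'.2.1 - b₀) m := by
          rw [Int.gcd_def]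
          exact Nat.dvd_gcd (Int.natCast_dvd.mp hx) (by simpa using hem)
        rw [← hg] at h3
        have := (Int.natCast_dvd_natCast.mpr h3).trans (Int.gcd_dvd_left _ _)
        exact_mod_cast this
    have hmd : (m:ℤ) ∣ t.2.1 - t'.2.1 := by
      have := keyL2 m b₀ t'.2.1 t.2.1 hcop h2 h1 (fun e he => (hiff e he).symm)
      exact this
    have h2d : ((2:ℤ)^(s-1)) ∣ t.2.1 - t'.2.1 := by
      by_cases hf : (2^(s-1):ℤ) ∣ t.2.1 - b₀
      · have hf' := hflag.mp hf
        have : t.2.1 - t'.2.1 = (t.2.1 - b₀) - (t'.2.1 - b₀) := by ring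
        rw [this]; exact dvd_sub hf hf'
      · have hf' := fun h => hf (hflag.mpr h)
        have hd1 : (2^(s-1):ℤ) ∣ t.2.1 + b₀ := by
          rcases two_dichotomy s hs2 t.2.1 b₀ hodd hodd₀
            ((by exact_mod_cast h2s4a : ((2:ℤ)^s) ∣ (4*(a:ℤ))).trans (hprod t.2.1 hdvd))
            with h | h
          · exact absurd h hf
          · exact h
        have hd2 : (2^(s-1):ℤ) ∣ t'.2.1 + b₀ := by
          rcases two_dichotomy s hs2 t'.2.1 b₀ hodd' hodd₀
            ((by exact_mod_cast h2s4a : ((2:ℤ)^s) ∣ (4*(a:ℤ))).trans (hprod t'.2.1 hdvd'))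
            with h | h
          · exact absurd h hf'
          · exact h
        have : t.2.1 - t'.2.1 = (t.2.1 + b₀) - (t'.2.1 + b₀) := by ring
        rw [this]; exact dvd_sub hd1 hd2
    have hcop2m : IsCoprime ((2:ℤ)^(s-1)) (m:ℤ) := by
      refine IsCoprime.pow_left (Int.prime_two.coprime_iff_not_dvd.mpr ?_)
      intro hd
      exact hm2 (by exact_mod_cast hd)
    have hfin := hcop2m.mul_dvd h2d hmd
    have hMcast : ((2:ℤ)^(s-1)) * (m:ℤ) = 2*(a:ℤ) := by
      have h := congrArg (fun x : ℕ => (x:ℤ)) hMa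
      push_cast at h
      exact h
    rwa [hMcast] at hfin
  -- b determines the triple within G
  have hbinj : ∀ t ∈ G, ∀ t' ∈ G, t.2.1 = t'.2.1 → t = t' := by
    intro t ht t' ht' hb
    have ha' := (hmem t ht).1
    have ha'' := (hmem t' ht').1
    have he1 := (hF t (Finset.mem_filter.mp (hGdef ▸ ht)).1).2.2.2
    have he2 := (hF t' (Finset.mem_filter.mp (hGdef ▸ ht')).1).2.2.2
    have hc : t.2.2 = t'.2.2 := by
      rw [ha'] at he1; rw [ha''] at he2; rw [hb] at he1
      have h4 : (4*(a:ℤ)) ≠ 0 := by positivity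
      have heq : (4*(a:ℤ))*t.2.2 = (4*(a:ℤ))*t'.2.2 := by linarith
      exact mul_left_cancel₀ h4 heq
    exact Prod.ext (ha'.trans ha''.symm) (Prod.ext hb hc)
  -- fibers of ψ have at most 2 elements
  have hfib : ∀ z ∈ G.image ψ, (G.filter (fun t => ψ t = z)).card ≤ 2 := by
    intro z _
    by_contra hcon
    push_neg at hcon
    obtain ⟨t1, t2, t3, ht1, ht2, ht3, h12, h13, h23⟩ := Finset.two_lt_card_iff.mp hcon
    simp only [Finset.mem_filter] at ht1 ht2 ht3
    have e12 : ψ t1 = ψ t2 := by rw [ht1.2, ht2.2]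
    have e13 : ψ t1 = ψ t3 := by rw [ht1.2, ht3.2]
    have e23 : ψ t2 = ψ t3 := by rw [ht2.2, ht3.2]
    have d12 := hpair t1 ht1.1 t2 ht2.1 e12
    have d13 := hpair t1 ht1.1 t3 ht3.1 e13
    have d23 := hpair t2 ht2.1 t3 ht3.1 e23
    have hb12 : t1.2.1 ≠ t2.2.1 := fun h => h12 (hbinj _ ht1.1 _ ht2.1 h)
    have hb13 : t1.2.1 ≠ t3.2.1 := fun h => h13 (hbinj _ ht1.1 _ ht3.1 h)
    have hb23 : t2.2.1 ≠ t3.2.1 := fun h => h23 (hbinj _ ht2.1 _ ht3.1 h)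
    have key : ∀ x y : ℤ, (2*(a:ℤ)) ∣ x - y → x ≠ y → |x| ≤ (a:ℤ) → |y| ≤ (a:ℤ) →
        x - y = 2*(a:ℤ) ∨ x - y = -(2*(a:ℤ)) := by
      intro x y hd hne hx hy
      have h0 : x - y ≠ 0 := sub_ne_zero.mpr hne
      have hle : 2*(a:ℤ) ≤ |x - y| := Int.le_of_dvd (abs_pos.mpr h0) ((dvd_abs _ _).mpr hd)
      have habs : |x - y| ≤ 2*(a:ℤ) := by
        have h1 := abs_le.mp hx
        have h2 := abs_le.mp hy
        rw [abs_le]; constructor <;> linarith [h1.1, h1.2, h2.1, h2.2]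
      have heq : |x - y| = 2*(a:ℤ) := le_antisymm habs hle
      exact (abs_eq (by positivity : (0:ℤ) ≤ 2*(a:ℤ))).mp heq
    have hx1 := (hmem t1 ht1.1).2.1
    have hx2 := (hmem t2 ht2.1).2.1
    have hx3 := (hmem t3 ht3.1).2.1
    have k12 := key _ _ d12 hb12 hx1 hx2
    have k13 := key _ _ d13 hb13 hx1 hx3
    have k23 := key _ _ d23 hb23 hx2 hx3
    omega
  have hcard := Finset.card_le_mul_card_image G 2 hfib
  have himg : (G.image ψ).card ≤ m.divisors.card * 2 := by
    have hsub : G.image ψ ⊆ m.divisors ×ˢ (Finset.univ : Finset Bool) := by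
      intro z hz
      obtain ⟨t, ht, rfl⟩ := Finset.mem_image.mp hz
      refine Finset.mem_product.mpr ⟨Nat.mem_divisors.mpr ⟨?_, hm0⟩, Finset.mem_univ _⟩
      have h := Int.gcd_dvd_right (a := t.2.1 - b₀) (b := (m:ℤ))
      exact_mod_cast h
    calc (G.image ψ).card ≤ (m.divisors ×ˢ (Finset.univ : Finset Bool)).card :=
          Finset.card_le_card hsub
      _ = m.divisors.card * 2 := by
          rw [Finset.card_product, Finset.card_univ, Fintype.card_bool]
  have hma : m ∣ a := by
    have hm4 : m ∣ 4*a := ⟨2^s, by rw [hsm]; ring⟩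
    have h2 : Nat.Coprime m 2 :=
      Nat.coprime_comm.mp ((Nat.Prime.coprime_iff_not_dvd Nat.prime_two).mpr hm2)
    have h4 : Nat.Coprime m 4 := by
      have := Nat.Coprime.pow_right 2 h2
      norm_num at this
      exact this
    exact h4.dvd_of_dvd_mul_left hm4
  have hdiv : m.divisors.card ≤ a.divisors.card :=
    Finset.card_le_card (Nat.divisors_subset_of_dvd (by omega) hma)
  calc G.card ≤ 2 * (G.image ψ).card := hcard
    _ ≤ 2 * (m.divisors.card * 2) := by omega
    _ = 4 * m.divisors.card := by ring
    _ ≤ 4 * a.divisors.card := by omega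


lemma sum_div_card_le (N : ℕ) :
    ((∑ a ∈ Finset.Ioc 0 N, a.divisors.card : ℕ) : ℝ) ≤ N * (1 + Real.log N) := by
  have hstep : (∑ a ∈ Finset.Ioc 0 N, a.divisors.card) = ∑ e ∈ Finset.Ioc 0 N, N / e := by
    have h1 : ∀ a ∈ Finset.Ioc 0 N, a.divisors.card
        = ∑ e ∈ Finset.Ioc 0 N, if e ∣ a then 1 else 0 := by
      intro a ha
      rw [← Finset.card_filter]
      congr 1
      ext e
      simp only [Nat.mem_divisors, Finset.mem_filter, Finset.mem_Ioc]
      rw [Finset.mem_Ioc] at ha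
      constructor
      · rintro ⟨hd, -⟩
        exact ⟨⟨Nat.pos_of_dvd_of_pos hd ha.1, (Nat.le_of_dvd ha.1 hd).trans ha.2⟩, hd⟩
      · rintro ⟨-, hd⟩
        exact ⟨hd, by omega⟩
    rw [Finset.sum_congr rfl h1, Finset.sum_comm]
    refine Finset.sum_congr rfl ?_
    intro e _
    rw [← Finset.card_filter]
    exact Nat.Ioc_filter_dvd_card_eq_div N e
  rw [hstep]
  push_cast
  calc (∑ e ∈ Finset.Ioc 0 N, ((N / e : ℕ) : ℝ))
      ≤ ∑ e ∈ Finset.Ioc 0 N, (N : ℝ) / e := by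
        refine Finset.sum_le_sum ?_
        intro e _
        exact Nat.cast_div_le
    _ = (N : ℝ) * ∑ e ∈ Finset.Ioc 0 N, ((e : ℝ))⁻¹ := by
        rw [Finset.mul_sum]
        refine Finset.sum_congr rfl ?_
        intro e _
        rw [div_eq_mul_inv]
    _ = (N : ℝ) * (harmonic N : ℝ) := by
        congr 1
        rw [harmonic_eq_sum_Icc]
        push_cast
        rw [← Finset.Icc_add_one_left_eq_Ioc, zero_add]
    _ ≤ (N : ℝ) * (1 + Real.log N) := by
        refine mul_le_mul_of_nonneg_left (harmonic_le_one_add_log N) (by positivity)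

lemma rf_finite (p : ℕ) (hp : p.Prime) : (reducedForms p).Finite := by
  classical
  have hsub : reducedForms p ⊆
      ↑((Finset.Icc (1:ℤ) p) ×ˢ (Finset.Icc (-(p:ℤ)) p) ×ˢ (Finset.Icc (1:ℤ) p)) := by
    rintro ⟨a, b, c⟩ ⟨h1, h2, h3, h4⟩
    simp only [Finset.coe_product, Set.mem_prod, Finset.mem_coe, Finset.mem_Icc] at *
    have hb := abs_le.mp h2
    have hp2 : (2:ℤ) ≤ p := by exact_mod_cast hp.two_le
    have hb2 : b^2 ≤ a^2 := by nlinarith [hb.1, hb.2]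
    have h3a : 3*a^2 ≤ (p:ℤ) := by nlinarith
    have hap : a ≤ (p:ℤ) := by nlinarith
    have hcp : c ≤ (p:ℤ) := by nlinarith
    refine ⟨⟨h1, hap⟩, ⟨?_, hb.2.trans hap⟩, ⟨le_trans h1 h3, hcp⟩⟩
    linarith [hb.1, hap]
  exact Set.Finite.subset (Finset.finite_toSet _) hsub

lemma rf_nonempty (p : ℕ) (hp : p.Prime) (hp4 : p % 4 = 3) : (reducedForms p).Nonempty := by
  obtain ⟨k, hk⟩ : ∃ k : ℕ, p = 4*k + 3 := ⟨p / 4, by omega⟩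
  refine ⟨(1, 1, (k:ℤ) + 1), ?_, ?_, ?_, ?_⟩ <;> simp [hk]
  · push_cast; ring

/-- There is an absolute constant C > 0 such that for every prime p ≡ 3 (mod 4),
the set S of reduced forms of discriminant -p is finite and nonempty, and, with
h = |S|, some (a, b, c) ∈ S has a ≥ C·h/log(2h). -/
theorem exists_form_with_large_a :
    ∃ C : ℝ, 0 < C ∧ ∀ p : ℕ, p.Prime → p % 4 = 3 →
      (reducedForms p).Finite ∧ (reducedForms p).Nonempty ∧
        ∃ t ∈ reducedForms p,
          C * (Nat.card (reducedForms p) : ℝ) /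
              Real.log (2 * (Nat.card (reducedForms p) : ℝ)) ≤ (t.1 : ℝ) := by
  classical
  refine ⟨1/20, by norm_num, ?_⟩
  intro p hp hp4
  have hfin := rf_finite p hp
  have hne := rf_nonempty p hp hp4
  refine ⟨hfin, hne, ?_⟩
  set F := hfin.toFinset with hFdef
  have hFmem : ∀ t, t ∈ F ↔ t ∈ reducedForms p := fun t => hfin.mem_toFinset
  have hFne : F.Nonempty := by obtain ⟨t, ht⟩ := hne; exact ⟨t, (hFmem t).mpr ht⟩
  obtain ⟨tm, htm, hmax⟩ := F.exists_max_image (fun t => t.1) hFne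
  set A := tm.1.toNat with hAdef
  have htm1 : 1 ≤ tm.1 := ((hFmem tm).mp htm).1
  have hA1 : 1 ≤ A := by omega
  have hcount : F.card ≤ 4 * (∑ a ∈ Finset.Ioc 0 A, a.divisors.card) := by
    have hdecomp := Finset.card_eq_sum_card_fiberwise
      (f := fun t : ℤ × ℤ × ℤ => t.1.toNat) (s := F) (t := Finset.Ioc 0 A) ?_
    · rw [hdecomp, Finset.mul_sum]
      refine Finset.sum_le_sum ?_
      intro a _
      exact slice_card_le p hp hp4 F (fun t ht => (hFmem t).mp ht) a
    · intro t ht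
      have h1 := ((hFmem t).mp ht).1
      have h2 := hmax t ht
      simp only [Finset.mem_coe, Finset.mem_Ioc]
      omega
  have hh : Nat.card (reducedForms p) = F.card := Nat.card_eq_card_finite_toFinset hfin
  refine ⟨tm, (hFmem tm).mp htm, ?_⟩
  rw [hh]
  set H : ℝ := (F.card : ℝ) with hHdef
  have hH1 : 1 ≤ H := by
    have := Finset.card_pos.mpr hFne
    rw [hHdef]; exact_mod_cast this
  have hAR : ((A : ℕ) : ℝ) = ((tm.1 : ℤ) : ℝ) := by
    have h : ((A : ℕ) : ℤ) = tm.1 := by omega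
    exact_mod_cast h
  have hsum : H ≤ 4 * A * (1 + Real.log A) := by
    have h1 : H ≤ 4 * ((∑ a ∈ Finset.Ioc 0 A, a.divisors.card : ℕ) : ℝ) := by
      rw [hHdef]; exact_mod_cast hcount
    calc H ≤ _ := h1
      _ ≤ 4 * ((A : ℝ) * (1 + Real.log A)) := by
          have := sum_div_card_le A
          linarith
      _ = 4 * A * (1 + Real.log A) := by ring
  have hl2 : (1/4 : ℝ) < Real.log 2 := by
    have := Real.log_two_gt_d9; linarith
  have hlH : Real.log 2 ≤ Real.log (2 * H) := by
    apply Real.log_le_log (by norm_num); nlinarith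
  have hlpos : (0:ℝ) < Real.log (2 * H) := by linarith
  rw [div_le_iff₀ hlpos]
  rw [← hAR]
  rcases le_total H (A : ℝ) with hcase | hcase
  · have h1 : (1/4 : ℝ) ≤ Real.log (2 * H) := by linarith
    have h2 := mul_le_mul_of_nonneg_right hcase (le_of_lt hlpos)
    nlinarith
  · have hA0 : (1:ℝ) ≤ (A:ℝ) := by exact_mod_cast hA1
    have hlogA : Real.log A ≤ Real.log (2 * H) := by
      apply Real.log_le_log (by positivity); nlinarith
    have h5 : 1 + Real.log A ≤ 5 * Real.log (2 * H) := by linarith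
    have h6 := mul_le_mul_of_nonneg_left h5 (show (0:ℝ) ≤ 4 * A by positivity)
    nlinarith
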